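/- Let G be a finite group and k a field of characteristic p > 0. Then the projective ideal Z^pr(kG) of the center of kG equals the image Tr_1^G(kG) of the transfer map x ↦ Σ_{g∈G} gxg⁻¹ from kG to Z(kG). -/

import Mathlib

open MonoidAlgebra

/-- A witness that the central element `z` of `kG` is "projective", i.e. that
the `kG`-bimodule endomorphism `x ↦ x * z` of `kG` factors through a
projective `kG`-bimodule.  Bimodules over `kG` are modules over
`kG ⊗ kG^op ≅ k[G×G]`, where `kG` itself is a `k[G×G]`-module via
`(g,h) • x = g * x * h⁻¹`; the maps `σ, π` are `k`-linear and equivariance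
for the `k[G×G]`-action is expressed on the group generators `(g,h)`. -/
structure ProjFactorization (k : Type) [Field k] (G : Type) [Group G]
    (z : MonoidAlgebra k G) : Type 1 where
  P : Type
  [acg : AddCommGroup P]
  [modk : Module k P]
  [mod : Module (MonoidAlgebra k (G × G)) P]
  [tower : IsScalarTower k (MonoidAlgebra k (G × G)) P]
  proj : Module.Projective (MonoidAlgebra k (G × G)) P
  σ : MonoidAlgebra k G →ₗ[k] P
  π : P →ₗ[k] MonoidAlgebra k G
  σ_equivariant : ∀ (g h : G) (x : MonoidAlgebra k G),
    σ (single g (1 : k) * x * single h⁻¹ (1 : k)) = single ((g, h) : G × G) (1 : k) • σ x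
  π_equivariant : ∀ (g h : G) (q : P),
    π (single ((g, h) : G × G) (1 : k) • q) = single g (1 : k) * π q * single h⁻¹ (1 : k)
  factors : ∀ x, π (σ x) = x * z

/-- The set `Z^pr(kG)` of central elements of `kG` whose multiplication
endomorphism factors through a projective `kG`-bimodule. -/
def projCenter (k : Type) [Field k] (G : Type) [Group G] : Set (MonoidAlgebra k G) :=
  {z | z ∈ Subalgebra.center k (MonoidAlgebra k G) ∧ Nonempty (ProjFactorization k G z)}

noncomputable def thetaA (k H : Type) [Field k] [Group H] :
    MonoidAlgebra k H →ₗ[k] MonoidAlgebra k H where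
  toFun a := single (1 : H) (a.coeff 1)
  map_add' a b := by
    show single (1:H) ((a+b).coeff 1) = single (1:H) (a.coeff 1) + single (1:H) (b.coeff 1)
    rw [show (a+b).coeff (1:H) = a.coeff 1 + b.coeff 1 from rfl, single_add]
  map_smul' c a := by
    show single (1:H) ((c • a).coeff 1) = c • single (1:H) (a.coeff 1)
    rw [show (c • a).coeff (1:H) = c • a.coeff 1 from rfl, MonoidAlgebra.smul_single]

theorem thetaA_key {k H : Type} [Field k] [Group H] [Fintype H] (a : MonoidAlgebra k H) :
    ∑ c : H, single c (1 : k) * thetaA k H (single c⁻¹ (1 : k) * a) = a := by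
  have h1 : ∀ c : H, thetaA k H (single c⁻¹ (1 : k) * a) = single (1 : H) (a.coeff c) := by
    intro c
    simp [thetaA, MonoidAlgebra.coeff_single_mul_apply]
  simp only [h1, MonoidAlgebra.single_mul_single, mul_one, one_mul]
  conv_rhs => rw [← MonoidAlgebra.sum_coeff_single a]
  rw [Finsupp.sum]
  exact (Finset.sum_subset (Finset.subset_univ _) (by
    intro x _ hx
    simp [Finsupp.notMem_support_iff.mp hx])).symm

theorem higman {k H : Type} [Field k] [Group H] [Fintype H]
    {P : Type} [AddCommGroup P] [Module k P]
    [Module (MonoidAlgebra k H) P] [IsScalarTower k (MonoidAlgebra k H) P]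
    (hP : Module.Projective (MonoidAlgebra k H) P) :
    ∃ θ : P →ₗ[k] P, ∀ q : P,
      ∑ c : H, single c (1 : k) • θ (single c⁻¹ (1 : k) • q) = q := by
  obtain ⟨s, hs⟩ := Module.projective_def.mp hP
  set A := MonoidAlgebra k H
  let ρ : (P →₀ A) →ₗ[A] P := Finsupp.linearCombination A (id : P → P)
  let θ : P →ₗ[k] P :=
    (ρ.restrictScalars k) ∘ₗ (Finsupp.mapRange.linearMap (thetaA k H)) ∘ₗ (s.restrictScalars k)
  refine ⟨θ, fun q => ?_⟩
  have step1 : ∀ c : H,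
      single c (1 : k) • θ (single c⁻¹ (1 : k) • q)
        = ρ (single c (1 : k) • Finsupp.mapRange.linearMap (thetaA k H)
              (single c⁻¹ (1 : k) • s q)) := by
    intro c
    have h1 : s (single c⁻¹ (1:k) • q) = single c⁻¹ (1:k) • s q := s.map_smul _ q
    have h2 : θ (single c⁻¹ (1:k) • q)
        = ρ (Finsupp.mapRange.linearMap (thetaA k H) (single c⁻¹ (1:k) • s q)) := by
      simp only [θ, LinearMap.comp_apply, LinearMap.restrictScalars_apply, h1]
    rw [h2, ← ρ.map_smul]
  calc ∑ c : H, single c (1 : k) • θ (single c⁻¹ (1 : k) • q)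
      = ρ (∑ c : H, single c (1 : k) • Finsupp.mapRange.linearMap (thetaA k H)
              (single c⁻¹ (1 : k) • s q)) := by
        rw [map_sum]; exact Finset.sum_congr rfl fun c _ => step1 c
    _ = ρ (s q) := by
        congr 1
        ext p
        rw [Finsupp.finset_sum_apply]
        have : ∀ c : H, (single c (1:k) • Finsupp.mapRange.linearMap (thetaA k H)
            (single c⁻¹ (1:k) • s q)) p
            = single c (1:k) * thetaA k H (single c⁻¹ (1:k) * s q p) := by
          intro c
          rw [Finsupp.smul_apply, Finsupp.mapRange.linearMap_apply, Finsupp.mapRange_apply,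
            Finsupp.smul_apply, smul_eq_mul, smul_eq_mul]
        rw [Finset.sum_congr rfl fun c _ => this c, thetaA_key]
    _ = q := hs q

section tr
variable {k G : Type} [Field k] [Group G] [Fintype G]

noncomputable def trSigma (x : MonoidAlgebra k G) :
    MonoidAlgebra k G →ₗ[k] MonoidAlgebra k (G × G) :=
  Finsupp.lsum k (fun a : G => ∑ g : G,
    (MonoidAlgebra.lsingle (R := k) ((a * g, g) : G × G) : k →ₗ[k] MonoidAlgebra k (G × G)))
    ∘ₗ (MonoidAlgebra.coeffLinearEquiv k).toLinearMap

noncomputable def trPi (x : MonoidAlgebra k G) :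
    MonoidAlgebra k (G × G) →ₗ[k] MonoidAlgebra k G :=
  Finsupp.lsum k (fun ab : G × G =>
    LinearMap.toSpanSingleton k (MonoidAlgebra k G)
      (single ab.1 (1 : k) * x * single ab.2⁻¹ (1 : k)))
    ∘ₗ (MonoidAlgebra.coeffLinearEquiv k).toLinearMap

theorem trSigma_single (x : MonoidAlgebra k G) (a : G) (c : k) :
    trSigma (k := k) x (single a c) = ∑ g : G, single ((a * g, g) : G × G) c := by
  rw [trSigma, LinearMap.comp_apply, LinearEquiv.coe_coe, MonoidAlgebra.coeffLinearEquiv_apply,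
    MonoidAlgebra.coeff_single]
  refine Eq.trans (Finsupp.lsum_single _ _ _ _) ?_
  refine Eq.trans (LinearMap.sum_apply _ _ _) ?_
  exact Finset.sum_congr rfl fun g _ => rfl

theorem trPi_single (x : MonoidAlgebra k G) (ab : G × G) (c : k) :
    trPi x (single ab c) = c • (single ab.1 (1 : k) * x * single ab.2⁻¹ (1 : k)) := by
  rw [trPi, LinearMap.comp_apply, LinearEquiv.coe_coe, MonoidAlgebra.coeffLinearEquiv_apply,
    MonoidAlgebra.coeff_single]
  exact Finsupp.lsum_single _ _ _ _


theorem trSigma_equivariant (x : MonoidAlgebra k G) (g h : G) (y : MonoidAlgebra k G) :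
    trSigma (k := k) x (single g (1:k) * y * single h⁻¹ (1:k))
      = single ((g, h) : G × G) (1:k) • trSigma (k := k) x y := by
  induction y using MonoidAlgebra.induction_linear with
  | zero => simp
  | add f f' hf hf' => rw [mul_add, add_mul, map_add, hf, hf', map_add, smul_add]
  | single a c =>
    rw [MonoidAlgebra.single_mul_single, MonoidAlgebra.single_mul_single, one_mul, mul_one,
      trSigma_single, trSigma_single, Finset.smul_sum]
    refine Fintype.sum_equiv (Equiv.mulLeft h⁻¹) _ _ fun u => ?_
    simp only [smul_eq_mul, MonoidAlgebra.single_mul_single, one_mul, Equiv.coe_mulLeft]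
    congr 1
    simp [Prod.ext_iff, Prod.mk_mul_mk, mul_assoc]

theorem trPi_equivariant (x : MonoidAlgebra k G) (g h : G) (q : MonoidAlgebra k (G × G)) :
    trPi x (single ((g, h) : G × G) (1:k) • q)
      = single g (1:k) * trPi x q * single h⁻¹ (1:k) := by
  induction q using MonoidAlgebra.induction_linear with
  | zero => simp
  | add f f' hf hf' => rw [smul_add, map_add, hf, hf', map_add, mul_add, add_mul]
  | single ab c =>
    rw [smul_eq_mul, MonoidAlgebra.single_mul_single, one_mul, trPi_single, trPi_single,
      mul_smul_comm, smul_mul_assoc]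
    congr 1
    have e1 : ((g, h) * ab).1 = g * ab.1 := rfl
    have e2 : ((g, h) * ab).2⁻¹ = ab.2⁻¹ * h⁻¹ := by
      rw [show ((g, h) * ab).2 = h * ab.2 from rfl, mul_inv_rev]
    rw [e1, e2,
      show (single (g * ab.1) (1:k) : MonoidAlgebra k G) = single g 1 * single ab.1 1 by
        rw [MonoidAlgebra.single_mul_single, one_mul],
      show (single (ab.2⁻¹ * h⁻¹) (1:k) : MonoidAlgebra k G) = single ab.2⁻¹ 1 * single h⁻¹ 1 by
        rw [MonoidAlgebra.single_mul_single, one_mul]]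
    simp only [mul_assoc]

theorem trPi_trSigma (x : MonoidAlgebra k G) (y : MonoidAlgebra k G) :
    trPi x (trSigma (k := k) x y) = y * ∑ g : G, single g (1:k) * x * single g⁻¹ (1:k) := by
  induction y using MonoidAlgebra.induction_linear with
  | zero => simp
  | add f f' hf hf' => rw [map_add, map_add, hf, hf', add_mul]
  | single a c =>
    rw [trSigma_single, map_sum, Finset.mul_sum]
    refine Finset.sum_congr rfl fun u _ => ?_
    rw [trPi_single]
    rw [← mul_assoc, ← mul_assoc, MonoidAlgebra.single_mul_single, mul_one,
      show (single (a * u) c : MonoidAlgebra k G) = c • single (a * u) (1:k) by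
        rw [MonoidAlgebra.smul_single', mul_one],
      smul_mul_assoc, smul_mul_assoc]


theorem tr_central (x : MonoidAlgebra k G) (y : MonoidAlgebra k G) :
    y * (∑ g : G, single g (1:k) * x * single g⁻¹ (1:k))
      = (∑ g : G, single g (1:k) * x * single g⁻¹ (1:k)) * y := by
  induction y using MonoidAlgebra.induction_linear with
  | zero => rw [zero_mul, mul_zero]
  | add f f' hf hf' => rw [add_mul, mul_add, hf, hf']
  | single a c =>
    rw [Finset.mul_sum, Finset.sum_mul]
    refine Fintype.sum_equiv (Equiv.mulLeft a) _ _ fun u => ?_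
    simp only [Equiv.coe_mulLeft]
    have hc : (single a c : MonoidAlgebra k G) = c • single a (1:k) := by
      rw [MonoidAlgebra.smul_single', mul_one]
    have L : (single a c : MonoidAlgebra k G) * (single u (1:k) * x * single u⁻¹ (1:k))
        = c • (single (a*u) (1:k) * x * single u⁻¹ (1:k)) := by
      rw [hc, smul_mul_assoc]
      congr 1
      rw [← mul_assoc, ← mul_assoc, MonoidAlgebra.single_mul_single, one_mul]
    have R : (single (a*u) (1:k) * x * single (a*u)⁻¹ (1:k)) * single a c
        = c • (single (a*u) (1:k) * x * single u⁻¹ (1:k)) := by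
      rw [hc, mul_smul_comm]
      congr 1
      rw [mul_assoc, mul_assoc, MonoidAlgebra.single_mul_single, one_mul, mul_inv_rev,
        inv_mul_cancel_right, ← mul_assoc]
    rw [L, R]

noncomputable def trFactorization (x : MonoidAlgebra k G) :
    ProjFactorization k G (∑ g : G, single g (1:k) * x * single g⁻¹ (1:k)) where
  P := MonoidAlgebra k (G × G)
  proj := inferInstance
  σ := trSigma x
  π := trPi x
  σ_equivariant := trSigma_equivariant x
  π_equivariant := trPi_equivariant x
  factors := trPi_trSigma x

end tr
/-- For a finite group `G` and a field `k` of characteristic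
`p > 0`, the projective ideal `Z^pr(kG)` equals the image of the transfer
map `Tr₁^G : kG → Z(kG)`, `x ↦ ∑_{g ∈ G} g * x * g⁻¹`. -/
theorem stmt4 (k : Type) [Field k] (G : Type) [Group G] [Fintype G]
    (p : ℕ) [CharP k p] (hp : p ≠ 0) :
    projCenter k G =
      Set.range (fun x : MonoidAlgebra k G =>
        ∑ g : G, single g (1 : k) * x * single g⁻¹ (1 : k)) := by
  ext z
  constructor
  · rintro ⟨hz, ⟨F⟩⟩
    letI := F.acg; letI := F.modk; letI := F.mod; letI := F.tower
    obtain ⟨θ, hθ⟩ := higman (k := k) (H := G × G) F.proj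
    refine ⟨∑ w : G, F.π (θ (F.σ (single w (1:k)))) * single w⁻¹ (1:k), ?_⟩
    have key : z
        = ∑ u : G, single u (1:k) *
            (∑ w : G, F.π (θ (F.σ (single w (1:k)))) * single w⁻¹ (1:k)) * single u⁻¹ (1:k) := by
      calc z = F.π (F.σ 1) := by rw [F.factors, one_mul]
        _ = F.π (∑ c : G × G, single c (1:k) • θ (single c⁻¹ (1:k) • F.σ 1)) := by
            rw [hθ (F.σ 1)]
        _ = ∑ c : G × G, F.π (single c (1:k) • θ (single c⁻¹ (1:k) • F.σ 1)) :=
            map_sum _ _ _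
        _ = ∑ u : G, ∑ v : G,
              single u (1:k) * F.π (θ (F.σ (single (u⁻¹ * v) (1:k)))) * single v⁻¹ (1:k) := by
            rw [Fintype.sum_prod_type]
            refine Finset.sum_congr rfl fun u _ => Finset.sum_congr rfl fun v _ => ?_
            have h2 : single (((u, v) : G × G))⁻¹ (1:k) • F.σ 1
                = F.σ (single (u⁻¹ * v) (1:k)) := by
              rw [show (((u, v) : G × G))⁻¹ = ((u⁻¹, v⁻¹) : G × G) from rfl,
                ← F.σ_equivariant u⁻¹ v⁻¹ 1]
              congr 1
              rw [mul_one, inv_inv, MonoidAlgebra.single_mul_single, one_mul]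
            rw [h2, F.π_equivariant u v]
        _ = _ := by
            refine Finset.sum_congr rfl fun u _ => ?_
            rw [Finset.mul_sum, Finset.sum_mul]
            refine Fintype.sum_equiv (Equiv.mulLeft u⁻¹) _ _ fun v => ?_
            simp only [Equiv.coe_mulLeft]
            rw [mul_assoc (single u (1:k)), mul_assoc (single u (1:k)),
              mul_assoc _ (single (u⁻¹ * v)⁻¹ (1:k)), MonoidAlgebra.single_mul_single, one_mul,
              mul_inv_rev, inv_inv, mul_inv_cancel_right]
    exact key.symm
  · rintro ⟨x, rfl⟩
    exact ⟨Subalgebra.mem_center_iff.mpr (fun y => tr_central x y), ⟨trFactorization x⟩⟩
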